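/- Let λ > −1/2 and let n ≥ 1 be an integer. Suppose x_1 < x_2 < ⋯ < x_n are n distinct real numbers in (−1, 1) which are exactly the roots of p_n^{(λ)}, and let ℓ_1, …, ℓ_n denote the Lagrange basis polynomials for interpolation at the nodes x_1, …, x_n. Then for all real x, Δ_{n,λ}(x) = (1 − x²)/(n(n + 2λ)) · Σ_{k=1}^{n} ℓ_k(x)² (1 − x_k x) (p_n^{(λ)′}(x_k))². -/

import Mathlib

open Polynomial Finset

theorem deriv_prod_XsubC {ι : Type*} [DecidableEq ι] (s : Finset ι) (v : ι → ℝ) :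
    derivative (∏ i ∈ s, (X - C (v i))) = ∑ i ∈ s, ∏ j ∈ s.erase i, (X - C (v j)) := by
  induction s using Finset.induction_on with
  | empty => simp
  | insert a s ha ih =>
    rw [Finset.prod_insert ha, derivative_mul, ih, Finset.sum_insert ha,
      Finset.erase_insert ha]
    simp only [derivative_sub, derivative_X, derivative_C, sub_zero, one_mul]
    congr 1
    rw [Finset.mul_sum]
    refine Finset.sum_congr rfl fun i hi => ?_
    rw [Finset.erase_insert_of_ne (by rintro rfl; exact ha hi),
      Finset.prod_insert (fun h => ha (Finset.mem_of_mem_erase h))]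

theorem turan_determinant_lagrange_representation
    (l : ℝ) (hl : -(1/2 : ℝ) < l) (n : ℕ) (hn : 1 ≤ n)
    (p : ℕ → Polynomial ℝ)
    (hp0 : p 0 = 1) (hp1 : p 1 = Polynomial.X)
    (hrec : ∀ m : ℕ, 1 ≤ m → ∀ x : ℝ,
      ((m : ℝ) + 2 * l) * (p (m + 1)).eval x
        = 2 * ((m : ℝ) + l) * x * (p m).eval x - (m : ℝ) * (p (m - 1)).eval x)
    (x : Fin n → ℝ) (hmono : StrictMono x)
    (hx : ∀ k, x k ∈ Set.Ioo (-1 : ℝ) 1)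
    (hroots : ∀ y : ℝ, (p n).eval y = 0 ↔ ∃ k, x k = y) :
    ∀ y : ℝ,
      ((p n).eval y) ^ 2 - (p (n - 1)).eval y * (p (n + 1)).eval y
        = (1 - y ^ 2) / ((n : ℝ) * ((n : ℝ) + 2 * l)) *
            ∑ k : Fin n,
              ((Lagrange.basis Finset.univ x k).eval y) ^ 2 * (1 - x k * y) *
                ((Polynomial.derivative (p n)).eval (x k)) ^ 2 := by
  classical
  -- polynomial-level recurrence
  have hrecP : ∀ m : ℕ, 1 ≤ m →
      (C ((m:ℝ) + 2*l)) * p (m+1) = C (2*((m:ℝ)+l)) * X * p m - C (m:ℝ) * p (m-1) := by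
    intro m hm
    apply Polynomial.funext
    intro y
    simp only [eval_mul, eval_sub, eval_C, eval_X]
    linarith [hrec m hm y]
  -- first derivative relation: d1 k is the relation for p (k+1)
  have d1 : ∀ k : ℕ,
      (1 - X^2) * derivative (p (k+1)) = C ((k:ℝ)+1) * (p k - X * p (k+1)) := by
    have key : ∀ k : ℕ,
        ((1 - X^2) * derivative (p (k+1)) = C ((k:ℝ)+1) * (p k - X * p (k+1))) ∧
        ((1 - X^2) * derivative (p (k+2)) = C ((k:ℝ)+2) * (p (k+1) - X * p (k+2))) := by
      intro k
      induction k with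
      | zero =>
        constructor
        · rw [hp0, hp1]
          simp only [derivative_X, Nat.cast_zero, zero_add, map_one, one_mul, mul_one]
          ring
        · have h2 := hrecP 1 le_rfl
          rw [hp0, hp1] at h2
          have hd := congrArg derivative h2
          have hC : (C (1 + 2*l) : ℝ[X]) ≠ 0 :=
            Polynomial.C_ne_zero.mpr (by intro h; linarith)
          apply mul_left_cancel₀ hC
          rw [hp1]
          simp only [derivative_mul, derivative_C, derivative_X, derivative_one, derivative_sub,
            zero_mul, mul_one, zero_add, add_zero, mul_zero, sub_zero, one_mul] at hd
          push_cast at h2 hd ⊢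
          simp only [Nat.cast_zero, map_add, map_mul, map_one, map_zero, map_ofNat,
            zero_add] at h2 hd ⊢
          linear_combination (1 - X^2) * hd + 2 * X * h2
      | succ k ih =>
        obtain ⟨ih1, ih2⟩ := ih
        constructor
        · rw [show ((k+1:ℕ):ℝ) = (k:ℝ)+1 by push_cast; ring,
            show ((k:ℝ)+1+1 : ℝ) = (k:ℝ)+2 by ring]
          exact ih2
        have hq := hrecP (k+2) (by omega)
        have hq1 := hrecP (k+1) (by omega)
        rw [show k+2-1 = k+1 from rfl] at hq
        rw [show k+1-1 = k from rfl] at hq1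
        rw [show k+2+1 = k+3 from rfl] at hq
        rw [show k+1+1 = k+2 from rfl] at hq1
        have E2 : (1 - X^2) * derivative (p (k+1))
            = C (((k:ℝ)+1)+2*l) * (X * p (k+1) - p (k+2)) := by
          push_cast at ih1 hq1 ⊢
          simp only [map_add, map_mul, map_one, map_ofNat] at ih1 hq1 ⊢
          linear_combination ih1 + hq1
        have hd := congrArg derivative hq
        simp only [derivative_mul, derivative_C, derivative_X, derivative_sub,
          zero_mul, mul_one, zero_add, add_zero] at hd
        have hC : (C ((k:ℝ)+2 + 2*l) : ℝ[X]) ≠ 0 := by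
          refine Polynomial.C_ne_zero.mpr ?_
          have : (0:ℝ) ≤ (k:ℝ) := Nat.cast_nonneg k
          intro h; linarith
        apply mul_left_cancel₀ hC
        rw [show k+1+2 = k+3 from rfl, show k+1+1 = k+2 from rfl,
          show ((k+1:ℕ):ℝ) = (k:ℝ)+1 by push_cast; ring]
        push_cast at ih2 E2 hq hd ⊢
        simp only [map_add, map_mul, map_one, map_ofNat] at ih2 E2 hq hd ⊢
        linear_combination (1 - X^2) * hd + (2*(C (k:ℝ)+2+C l)) * X * ih2
          - (C (k:ℝ)+2) * E2 + (C (k:ℝ)+3) * X * hq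
    intro k
    exact (key k).1
  -- second derivative relation
  have d2 : ∀ k : ℕ,
      (1 - X^2) * derivative (p k) = C ((k:ℝ)+2*l) * (X * p k - p (k+1)) := by
    intro k
    match k with
    | 0 => rw [hp0, hp1]; simp
    | (j+1) =>
      have hq1 := hrecP (j+1) (by omega)
      rw [show j+1-1 = j from rfl, show j+1+1 = j+2 from rfl] at hq1
      have ih1 := d1 j
      rw [show j+1+1 = j+2 from rfl, show ((j+1:ℕ):ℝ) = (j:ℝ)+1 by push_cast; ring]
      push_cast at ih1 hq1 ⊢
      simp only [map_add, map_mul, map_one, map_ofNat] at ih1 hq1 ⊢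
      linear_combination ih1 + hq1
  -- degrees and leading coefficients
  have deg : ∀ k : ℕ, (p k).natDegree ≤ k ∧ 0 < (p k).coeff k := by
    have key : ∀ k : ℕ, ((p k).natDegree ≤ k ∧ 0 < (p k).coeff k) ∧
        ((p (k+1)).natDegree ≤ k+1 ∧ 0 < (p (k+1)).coeff (k+1)) := by
      intro k
      induction k with
      | zero =>
        refine ⟨⟨?_, ?_⟩, ?_, ?_⟩ <;> simp [hp0, hp1]
      | succ k ih =>
        obtain ⟨ih0, ih1⟩ := ih
        have hq := hrecP (k+1) (by omega)
        rw [show k+1-1 = k from rfl, show k+1+1 = k+2 from rfl] at hq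
        have ha : (0:ℝ) < ((k+1:ℕ):ℝ) + 2*l := by
          push_cast; linarith [Nat.cast_nonneg (α := ℝ) k]
        have hb : (0:ℝ) < 2*(((k+1:ℕ):ℝ) + l) := by
          push_cast; linarith [Nat.cast_nonneg (α := ℝ) k]
        refine ⟨ih1, ?_, ?_⟩
        · rw [show k+1+1 = k+2 from rfl]
          rw [← Polynomial.natDegree_C_mul (ne_of_gt ha), hq]
          refine le_trans (Polynomial.natDegree_sub_le _ _) (max_le ?_ ?_)
          · refine le_trans Polynomial.natDegree_mul_le ?_
            have h1 : (C (2*(((k+1:ℕ):ℝ)+l)) * X).natDegree ≤ 1 :=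
              le_trans (Polynomial.natDegree_C_mul_le _ _) Polynomial.natDegree_X_le
            have h2 := ih1.1
            omega
          · refine le_trans (Polynomial.natDegree_C_mul_le _ _) ?_
            have h2 := ih0.1
            omega
        · rw [show k+1+1 = k+2 from rfl]
          have hcoef := congrArg (fun q => Polynomial.coeff q (k+2)) hq
          simp only [Polynomial.coeff_C_mul, Polynomial.coeff_sub, mul_assoc,
            Polynomial.coeff_X_mul] at hcoef
          rw [Polynomial.coeff_eq_zero_of_natDegree_lt (lt_of_le_of_lt ih0.1 (by omega))] at hcoef
          rw [mul_zero, sub_zero] at hcoef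
          nlinarith [mul_pos hb ih1.2, ha, hcoef]
    intro k; exact (key k).1
  obtain ⟨m, rfl⟩ : ∃ m, n = m + 1 := ⟨n - 1, (Nat.succ_pred_eq_of_pos hn).symm⟩
  -- the ODE, multiplied by (1 - X^2)
  have hODE : (1 - X^2)^2 * derivative (derivative (p (m+1)))
      = C (2*l+1) * X * ((1 - X^2) * derivative (p (m+1)))
        - C (((m:ℝ)+1) * (((m:ℝ)+1) + 2*l)) * ((1 - X^2) * p (m+1)) := by
    have hd1 := congrArg derivative (d1 m)
    simp only [derivative_mul, derivative_sub, derivative_one, derivative_pow, derivative_X,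
      derivative_C, zero_mul, mul_one, zero_add, add_zero, zero_sub, sub_zero, one_mul,
      Nat.cast_ofNat, pow_one] at hd1
    have hB := d2 m
    have hC := d1 m
    simp only [map_add, map_mul, map_one, map_ofNat] at hd1 hB hC ⊢
    linear_combination (1 - X^2) * hd1 + (C (m:ℝ) + 1) * hB - (C (m:ℝ) + 2 * C l) * X * hC
  -- the main polynomial identity
  have hM : C (((m:ℝ)+1) * (((m:ℝ)+1) + 2*l)) * ((p (m+1))^2 - p m * p (m+2))
      = (1 - X^2)^2 * ((derivative (p (m+1)))^2
          - p (m+1) * derivative (derivative (p (m+1))))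
        + X * (1 - X^2) * (p (m+1) * derivative (p (m+1))) := by
    have hC := d1 m
    have hE := hrecP (m+1) (by omega)
    rw [show m+1-1 = m from rfl, show m+1+1 = m+2 from rfl,
      show ((m+1:ℕ):ℝ) = (m:ℝ)+1 by push_cast; ring] at hE
    simp only [map_add, map_mul, map_one, map_ofNat] at hC hE hODE ⊢
    linear_combination (p (m+1)) * hODE
      + (-((1 - X^2) * derivative (p (m+1))) - (C (m:ℝ) + 1) * (p m - X * p (m+1))
          + 2 * C l * X * p (m+1)) * hC
      - ((C (m:ℝ) + 1) * p m) * hE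
  -- factorization of p (m+1)
  set q : Polynomial ℝ := ∏ k : Fin (m+1), (X - C (x k)) with hq_def
  set qq : Fin (m+1) → Polynomial ℝ :=
    fun k => ∏ j ∈ Finset.univ.erase k, (X - C (x j)) with hqq_def
  have hinj : Function.Injective x := hmono.injective
  set c : ℝ := (p (m+1)).coeff (m+1) with hc_def
  have hc0 : c ≠ 0 := ne_of_gt (deg (m+1)).2
  have hq_monic : q.Monic := monic_prod_of_monic _ _ (fun i _ => monic_X_sub_C _)
  have hq_deg : q.natDegree = m+1 := by
    rw [hq_def, Polynomial.natDegree_prod_of_monic _ _ (fun i _ => monic_X_sub_C _)]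
    simp [Polynomial.natDegree_X_sub_C]
  have hq_eval : ∀ k, q.eval (x k) = 0 := by
    intro k
    rw [hq_def, Polynomial.eval_prod]
    exact Finset.prod_eq_zero (Finset.mem_univ k) (by simp)
  have hfact : p (m+1) = C c * q := by
    have hz : p (m+1) - C c * q = 0 := by
      by_contra hz0
      have hcoeffs : ∀ j, m+1 ≤ j → (p (m+1) - C c * q).coeff j = 0 := by
        intro j hj
        rcases eq_or_lt_of_le hj with h | h
        · rw [Polynomial.coeff_sub, Polynomial.coeff_C_mul, ← h]
          rw [show q.coeff (m+1) = 1 from by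
            have := Polynomial.Monic.coeff_natDegree hq_monic
            rwa [hq_deg] at this]
          ring
        · rw [Polynomial.coeff_sub, Polynomial.coeff_C_mul,
            Polynomial.coeff_eq_zero_of_natDegree_lt (lt_of_le_of_lt (deg (m+1)).1 h),
            Polynomial.coeff_eq_zero_of_natDegree_lt (by rw [hq_deg]; exact h)]
          ring
      have hdlt : (p (m+1) - C c * q).natDegree < m+1 := by
        by_contra hge
        push_neg at hge
        exact Polynomial.leadingCoeff_ne_zero.mpr hz0
          (hcoeffs _ hge)
      have := Polynomial.eq_zero_of_natDegree_lt_card_of_eval_eq_zero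
        (p (m+1) - C c * q) hinj
        (fun k => by
          simp only [Polynomial.eval_sub, Polynomial.eval_mul, Polynomial.eval_C]
          rw [hq_eval k, (hroots (x k)).mpr ⟨k, rfl⟩]
          ring)
        (by rwa [Fintype.card_fin])
      exact hz0 this
    exact sub_eq_zero.mp hz
  -- derivative of q
  have hDq : derivative q = ∑ k : Fin (m+1), qq k := by
    rw [hq_def, deriv_prod_XsubC]
  -- second derivative of q
  have hDDq : derivative (derivative q)
      = ∑ k : Fin (m+1), ∑ j ∈ Finset.univ.erase k,
          ∏ i ∈ (Finset.univ.erase k).erase j, (X - C (x i)) := by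
    rw [hDq, map_sum]
    exact Finset.sum_congr rfl fun k _ => deriv_prod_XsubC _ _
  -- product identity
  have hqr : ∀ (k : Fin (m+1)), ∀ j ∈ Finset.univ.erase k,
      qq k * qq j = q * ∏ i ∈ (Finset.univ.erase k).erase j, (X - C (x i)) := by
    intro k j hj
    have hjk : j ≠ k := (Finset.mem_erase.mp hj).1
    have h1 : qq j = (X - C (x k)) * ∏ i ∈ (Finset.univ.erase k).erase j, (X - C (x i)) := by
      rw [hqq_def]
      rw [Finset.erase_right_comm]
      exact (Finset.mul_prod_erase _ _ (Finset.mem_erase.mpr ⟨hjk.symm, Finset.mem_univ k⟩)).symm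
    have h2 : q = (X - C (x k)) * qq k := by
      rw [hq_def, hqq_def]
      exact (Finset.mul_prod_erase _ _ (Finset.mem_univ k)).symm
    rw [h1, h2]; ring
  -- sum of squares identity
  have hSq : ∑ k : Fin (m+1), (qq k)^2
      = (derivative q)^2 - q * derivative (derivative q) := by
    have step1 : (derivative q)^2
        = ∑ k : Fin (m+1), ∑ j : Fin (m+1), qq k * qq j := by
      rw [hDq, sq, Finset.sum_mul_sum]
    have step2 : ∀ k : Fin (m+1),
        ∑ j : Fin (m+1), qq k * qq j
          = (qq k)^2 + ∑ j ∈ Finset.univ.erase k, qq k * qq j := by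
      intro k
      rw [← Finset.add_sum_erase _ _ (Finset.mem_univ k), sq]
    have step3 : ∑ k : Fin (m+1), ∑ j ∈ Finset.univ.erase k, qq k * qq j
        = q * derivative (derivative q) := by
      rw [hDDq, Finset.mul_sum]
      refine Finset.sum_congr rfl fun k _ => ?_
      rw [Finset.mul_sum]
      exact Finset.sum_congr rfl fun j hj => hqr k j hj
    calc ∑ k : Fin (m+1), (qq k)^2
        = (∑ k : Fin (m+1), ((qq k)^2 + ∑ j ∈ Finset.univ.erase k, qq k * qq j))
            - ∑ k : Fin (m+1), ∑ j ∈ Finset.univ.erase k, qq k * qq j := by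
          rw [Finset.sum_add_distrib]; ring
      _ = (derivative q)^2 - q * derivative (derivative q) := by
          rw [step3, step1]
          congr 1
          exact (Finset.sum_congr rfl fun k _ => (step2 k)).symm
  -- eval of qq j at nodes
  have hqq_eval_ne : ∀ (k j : Fin (m+1)), j ≠ k → (qq j).eval (x k) = 0 := by
    intro k j hjk
    rw [hqq_def]
    simp only [Polynomial.eval_prod]
    exact Finset.prod_eq_zero (Finset.mem_erase.mpr ⟨hjk.symm, Finset.mem_univ k⟩) (by simp)
  -- derivative of p at nodes
  have hder_node : ∀ k : Fin (m+1),
      (derivative (p (m+1))).eval (x k) = c * ∏ j ∈ Finset.univ.erase k, (x k - x j) := by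
    intro k
    rw [hfact, derivative_mul, derivative_C]
    simp only [zero_mul, zero_add, Polynomial.eval_mul, Polynomial.eval_C]
    rw [hDq]
    rw [Polynomial.eval_finset_sum]
    rw [Finset.sum_eq_single k (fun j _ hjk => hqq_eval_ne k j hjk) (by simp)]
    congr 1
    rw [hqq_def]
    simp [Polynomial.eval_prod]
  -- Lagrange basis identity
  have hlag : ∀ (k : Fin (m+1)) (y : ℝ),
      (Lagrange.basis Finset.univ x k).eval y * (derivative (p (m+1))).eval (x k)
        = c * (qq k).eval y := by
    intro k y
    rw [hder_node k]
    have hb : (Lagrange.basis Finset.univ x k).eval y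
        = ∏ j ∈ Finset.univ.erase k, ((x k - x j)⁻¹ * (y - x j)) := by
      rw [Lagrange.basis]
      simp only [Polynomial.eval_prod, Lagrange.basisDivisor, Polynomial.eval_mul,
        Polynomial.eval_C, Polynomial.eval_sub, Polynomial.eval_X]
    rw [hb, hqq_def]
    simp only [Polynomial.eval_prod, Polynomial.eval_sub, Polynomial.eval_X, Polynomial.eval_C]
    rw [mul_comm ((∏ j ∈ Finset.univ.erase k, ((x k - x j)⁻¹ * (y - x j)))) _, mul_assoc,
      ← Finset.prod_mul_distrib]
    congr 1
    refine Finset.prod_congr rfl fun j hj => ?_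
    have hne : x k - x j ≠ 0 := sub_ne_zero.mpr (fun h =>
      (Finset.mem_erase.mp hj).1 (hinj h).symm)
    field_simp
  -- final assembly
  intro y
  rw [show m+1-1 = m from rfl, show m+1+1 = m+2 from rfl]
  have hN : ((m+1:ℕ):ℝ) * (((m+1:ℕ):ℝ) + 2 * l) ≠ 0 := by
    have h1 : (0:ℝ) < ((m+1:ℕ):ℝ) := by push_cast; linarith [Nat.cast_nonneg (α := ℝ) m]
    have h2 : (0:ℝ) < ((m+1:ℕ):ℝ) + 2*l := by push_cast; linarith [Nat.cast_nonneg (α := ℝ) m]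
    positivity
  rw [div_mul_eq_mul_div, eq_div_iff hN]
  -- evaluate hM at y
  have hMy := congrArg (Polynomial.eval y) hM
  simp only [Polynomial.eval_mul, Polynomial.eval_add, Polynomial.eval_sub, Polynomial.eval_pow,
    Polynomial.eval_C, Polynomial.eval_X, Polynomial.eval_one] at hMy
  -- evals via factorization
  have ep : (p (m+1)).eval y = c * q.eval y := by rw [hfact]; simp
  have eu : (derivative (p (m+1))).eval y = c * (derivative q).eval y := by
    rw [hfact, derivative_mul, derivative_C]; simp
  have ew : (derivative (derivative (p (m+1)))).eval y
      = c * (derivative (derivative q)).eval y := by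
    rw [hfact, derivative_mul, derivative_C, zero_mul, zero_add, derivative_mul, derivative_C]
    simp
  -- the sum
  have hS : ∑ k : Fin (m+1),
      ((Lagrange.basis Finset.univ x k).eval y) ^ 2 * (1 - x k * y) *
        ((derivative (p (m+1))).eval (x k)) ^ 2
      = c^2 * ((1 - y^2) * (((derivative q).eval y)^2
            - q.eval y * (derivative (derivative q)).eval y)
          + y * q.eval y * (derivative q).eval y) := by
    have term : ∀ k : Fin (m+1),
        ((Lagrange.basis Finset.univ x k).eval y) ^ 2 * (1 - x k * y) *
          ((derivative (p (m+1))).eval (x k)) ^ 2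
        = c^2 * ((1 - y^2) * ((qq k).eval y)^2
            + y * ((qq k).eval y * ((y - x k) * (qq k).eval y))) := by
      intro k
      have h1 := hlag k y
      have hsq : ((Lagrange.basis Finset.univ x k).eval y) ^ 2 *
          ((derivative (p (m+1))).eval (x k)) ^ 2 = (c * (qq k).eval y)^2 := by
        rw [← mul_pow, h1]
      calc ((Lagrange.basis Finset.univ x k).eval y) ^ 2 * (1 - x k * y) *
            ((derivative (p (m+1))).eval (x k)) ^ 2
          = ((Lagrange.basis Finset.univ x k).eval y) ^ 2 *
            ((derivative (p (m+1))).eval (x k)) ^ 2 * (1 - x k * y) := by ring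
        _ = (c * (qq k).eval y)^2 * (1 - x k * y) := by rw [hsq]
        _ = c^2 * ((1 - y^2) * ((qq k).eval y)^2
              + y * ((qq k).eval y * ((y - x k) * (qq k).eval y))) := by ring
    rw [Finset.sum_congr rfl fun k _ => term k]
    have hqev : ∀ k : Fin (m+1), (y - x k) * (qq k).eval y = q.eval y := by
      intro k
      have h2 : q = (X - C (x k)) * qq k := by
        rw [hq_def, hqq_def]
        exact (Finset.mul_prod_erase _ _ (Finset.mem_univ k)).symm
      rw [h2]
      simp [Polynomial.eval_mul]
    have hsum2 : ∑ k : Fin (m+1), ((qq k).eval y)^2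
        = ((derivative q).eval y)^2 - q.eval y * (derivative (derivative q)).eval y := by
      have := congrArg (Polynomial.eval y) hSq
      simpa [Polynomial.eval_finset_sum, Polynomial.eval_pow, Polynomial.eval_sub,
        Polynomial.eval_mul] using this
    have hsum1 : ∑ k : Fin (m+1), (qq k).eval y = (derivative q).eval y := by
      have := congrArg (Polynomial.eval y) hDq
      simpa [Polynomial.eval_finset_sum] using this.symm
    have expand : ∀ k : Fin (m+1),
        c^2 * ((1 - y^2) * ((qq k).eval y)^2
            + y * ((qq k).eval y * ((y - x k) * (qq k).eval y)))
        = c^2 * (1 - y^2) * ((qq k).eval y)^2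
            + c^2 * y * q.eval y * ((qq k).eval y) := by
      intro k
      rw [← hqev k]
      ring
    rw [Finset.sum_congr rfl fun k _ => expand k, Finset.sum_add_distrib,
      ← Finset.mul_sum, ← Finset.mul_sum, hsum1, hsum2]
    ring
  rw [hS, ep]
  push_cast
  rw [ep, eu, ew] at hMy
  linear_combination hMy
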